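/- For any r×c real payoff matrix M with entries in [0,1], any ε > 0, and any k ≥ ln(r)/(2ε²), there exists a multiset T of k columns (with repetition allowed) such that for every row i, the average (1/k)·Σ_{j∈T} M_{i,j} is at least v − ε, where v is the value of the game (which by the minimax theorem equals max_q min_i Σ_j q(j) M_{i,j}). -/

import Mathlib

open Finset

section Helpers
open Real



lemma Dpos {p : ℝ} (hp0 : 0 ≤ p) (hp1 : p ≤ 1) (s : ℝ) :
    0 < 1 - p + p * Real.exp s := by
  rcases eq_or_lt_of_le hp0 with h | h
  · simp [← h]
  · nlinarith [Real.exp_pos s, mul_pos h (Real.exp_pos s)]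

lemma hoeffding_core {p : ℝ} (hp0 : 0 ≤ p) (hp1 : p ≤ 1) (s : ℝ) :
    Real.log (1 - p + p * Real.exp s) - s * p ≤ s ^ 2 / 8 := by
  set D : ℝ → ℝ := fun t => 1 - p + p * Real.exp t with hD
  have hDpos : ∀ t, 0 < D t := fun t => Dpos hp0 hp1 t
  set ψ : ℝ → ℝ := fun t => t ^ 2 / 8 - (Real.log (D t) - t * p) with hψdef
  set ψ₁ : ℝ → ℝ := fun t => t / 4 - (p * Real.exp t / D t - p) with hψ₁def
  have hDd : ∀ t, HasDerivAt D (p * Real.exp t) t := fun t => by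
    exact ((Real.hasDerivAt_exp t).const_mul p).const_add (1 - p)
  have hψd : ∀ t, HasDerivAt ψ (ψ₁ t) t := by
    intro t
    have hlog : HasDerivAt (fun t => Real.log (D t)) (p * Real.exp t / D t) t :=
      (hDd t).log (ne_of_gt (hDpos t))
    have h1 : HasDerivAt (fun t : ℝ => t ^ 2 / 8) (2 * t ^ 1 / 8) t :=
      (hasDerivAt_pow 2 t).div_const 8
    have h2 : HasDerivAt (fun t : ℝ => t * p) p t := by
      simpa using (hasDerivAt_id t).mul_const p
    have := h1.sub (hlog.sub h2)
    refine this.congr_deriv ?_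
    simp [hψ₁def]; ring
  have hψ₁d : ∀ t, HasDerivAt ψ₁
      (1 / 4 - ((p * Real.exp t * D t - p * Real.exp t * (p * Real.exp t)) / D t ^ 2)) t := by
    intro t
    have hq : HasDerivAt (fun t => p * Real.exp t / D t)
        ((p * Real.exp t * D t - p * Real.exp t * (p * Real.exp t)) / D t ^ 2) t :=
      ((Real.hasDerivAt_exp t).const_mul p).div (hDd t) (ne_of_gt (hDpos t))
    have h1 : HasDerivAt (fun t : ℝ => t / 4) (1 / 4) t := by
      simpa using (hasDerivAt_id t).div_const 4
    exact h1.sub (hq.sub_const p)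
  have hψ₁nonneg : ∀ t, 0 ≤ 1 / 4 - ((p * Real.exp t * D t - p * Real.exp t * (p * Real.exp t)) / D t ^ 2) := by
    intro t
    rw [sub_nonneg, div_le_iff₀ (pow_pos (hDpos t) 2)]
    have h := sq_nonneg (D t - 2 * (p * Real.exp t))
    generalize D t = d at h ⊢
    nlinarith [h]
  have hmono : Monotone ψ₁ := monotone_of_hasDerivAt_nonneg hψ₁d hψ₁nonneg
  have hψ0 : ψ 0 = 0 := by simp [hψdef, hD]
  have hψ₁0 : ψ₁ 0 = 0 := by simp [hψ₁def, hD]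
  have key : 0 ≤ ψ s := by
    rcases lt_trichotomy s 0 with hs | hs | hs
    · obtain ⟨x, hx, hxeq⟩ := exists_hasDerivAt_eq_slope ψ ψ₁ hs
        (fun t _ => (hψd t).continuousAt.continuousWithinAt) (fun t _ => hψd t)
      have h1 : ψ₁ x ≤ 0 := hψ₁0 ▸ hmono (le_of_lt hx.2)
      rw [hxeq, hψ0, div_le_iff₀ (by linarith : (0:ℝ) < 0 - s)] at h1
      linarith
    · rw [hs, hψ0]
    · obtain ⟨x, hx, hxeq⟩ := exists_hasDerivAt_eq_slope ψ ψ₁ hs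
        (fun t _ => (hψd t).continuousAt.continuousWithinAt) (fun t _ => hψd t)
      have h1 : 0 ≤ ψ₁ x := hψ₁0 ▸ hmono (le_of_lt hx.1)
      rw [hxeq, hψ0, sub_zero, sub_zero, le_div_iff₀ hs] at h1
      linarith
  have := key
  simp only [hψdef] at this
  linarith

lemma mgf_bound {n : ℕ} (q X : Fin n → ℝ) (hq : ∀ j, 0 ≤ q j) (hq1 : ∑ j, q j = 1)
    (hX : ∀ j, X j ∈ Set.Icc (0 : ℝ) 1) (L : ℝ) :
    ∑ j, q j * Real.exp (L * ((∑ j', q j' * X j') - X j)) ≤ Real.exp (L ^ 2 / 8) := by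
  set p : ℝ := ∑ j', q j' * X j' with hp
  have hp0 : 0 ≤ p := Finset.sum_nonneg fun j _ => mul_nonneg (hq j) (hX j).1
  have hp1 : p ≤ 1 := by
    calc p ≤ ∑ j, q j := Finset.sum_le_sum fun j _ => by
            simpa using mul_le_mul_of_nonneg_left (hX j).2 (hq j)
    _ = 1 := hq1
  have step1 : ∀ j, Real.exp (L * (p - X j)) ≤
      Real.exp (L * p) * (1 - X j + X j * Real.exp (-L)) := by
    intro j
    have hconv := convexOn_exp.2 (Set.mem_univ (0 : ℝ)) (Set.mem_univ (-L))
      (by linarith [(hX j).2] : 0 ≤ 1 - X j) (hX j).1 (by ring)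
    simp only [smul_eq_mul, mul_zero, zero_add, Real.exp_zero, mul_one] at hconv
    have : Real.exp (L * (p - X j)) = Real.exp (L * p) * Real.exp (X j * (-L)) := by
      rw [← Real.exp_add]; ring_nf
    rw [this]
    have := mul_le_mul_of_nonneg_left hconv (le_of_lt (Real.exp_pos (L * p)))
    calc Real.exp (L * p) * Real.exp (X j * (-L)) ≤
        Real.exp (L * p) * (1 - X j + X j * Real.exp (-L)) := this
    _ = Real.exp (L * p) * (1 - X j + X j * Real.exp (-L)) := rfl
  calc ∑ j, q j * Real.exp (L * (p - X j))
      ≤ ∑ j, q j * (Real.exp (L * p) * (1 - X j + X j * Real.exp (-L))) :=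
        Finset.sum_le_sum fun j _ => mul_le_mul_of_nonneg_left (step1 j) (hq j)
    _ = ∑ j, Real.exp (L * p) * (q j - q j * X j + q j * X j * Real.exp (-L)) :=
        Finset.sum_congr rfl fun j _ => by ring
    _ = Real.exp (L * p) * ∑ j, (q j - q j * X j + q j * X j * Real.exp (-L)) := by
        rw [← Finset.mul_sum]
    _ = Real.exp (L * p) * (1 - p + p * Real.exp (-L)) := by
        rw [Finset.sum_add_distrib, Finset.sum_sub_distrib, hq1, ← Finset.sum_mul, ← hp]
    _ ≤ Real.exp (L ^ 2 / 8) := by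
        have hcore := hoeffding_core hp0 hp1 (-L)
        have hDp := Dpos hp0 hp1 (-L)
        have hlog : 1 - p + p * Real.exp (-L) ≤ Real.exp (L ^ 2 / 8 - L * p) := by
          rw [← Real.exp_log hDp]
          apply Real.exp_le_exp.2
          have : (-L) ^ 2 = L ^ 2 := by ring
          rw [this] at hcore
          linarith
        calc Real.exp (L * p) * (1 - p + p * Real.exp (-L))
            ≤ Real.exp (L * p) * Real.exp (L ^ 2 / 8 - L * p) :=
              mul_le_mul_of_nonneg_left hlog (le_of_lt (Real.exp_pos _))
          _ = Real.exp (L ^ 2 / 8) := by rw [← Real.exp_add]; ring_nf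


lemma row_bound {n k : ℕ} (hk : 0 < k) (q X : Fin n → ℝ) (hq0 : ∀ j, 0 ≤ q j)
    (hq1 : ∑ j, q j = 1) (hX : ∀ j, X j ∈ Set.Icc (0 : ℝ) 1) (ε u : ℝ) (hε : 0 < ε)
    (hu : u ≤ ∑ j, q j * X j) [DecidablePred fun T : Fin k → Fin n => ∑ m, X (T m) < k * (u - ε)] :
    ∑ T ∈ univ.filter (fun T : Fin k → Fin n => ∑ m, X (T m) < k * (u - ε)), ∏ m, q (T m)
      < Real.exp (-(2 * k * ε ^ 2)) := by
  have hkpos : (0 : ℝ) < k := by exact_mod_cast hk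
  obtain ⟨E, hEdef⟩ : ∃ E : ℝ, E = ∑ j, q j * X j := ⟨_, rfl⟩
  obtain ⟨Bad, hBdef⟩ : ∃ B : Finset (Fin k → Fin n),
      B = univ.filter (fun T : Fin k → Fin n => ∑ m, X (T m) < k * (u - ε)) := ⟨_, rfl⟩
  rw [← hBdef]
  have hw0 : ∀ T : Fin k → Fin n, 0 ≤ ∏ m, q (T m) := fun T => prod_nonneg fun m _ => hq0 (T m)
  rcases Bad.eq_empty_or_nonempty with hBe | hBne
  · rw [hBe]
    simpa using Real.exp_pos _
  obtain ⟨t, htdef⟩ : ∃ t : ℝ, t = Bad.inf' hBne (fun T => E - (∑ m, X (T m)) / k) := ⟨_, rfl⟩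
  have htgt : ε < t := by
    obtain ⟨T0, hT0mem, hT0eq⟩ := Finset.exists_mem_eq_inf' hBne
      (fun T => E - (∑ m, X (T m)) / k)
    have hT0 : ∑ m, X (T0 m) < k * (u - ε) := by
      have := hT0mem
      rw [hBdef, Finset.mem_filter] at this
      exact this.2
    have h2 : (∑ m, X (T0 m)) / k < u - ε := by
      rw [div_lt_iff₀ hkpos]; linarith
    rw [htdef, hT0eq, hEdef]
    linarith
  have htpos : 0 < t := hε.trans htgt
  have htle : ∀ T ∈ Bad, (k : ℝ) * t ≤ k * E - ∑ m, X (T m) := by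
    intro T hT
    have h := Finset.inf'_le (fun T => E - (∑ m, X (T m)) / k) hT
    rw [← htdef] at h
    have h2 := mul_le_mul_of_nonneg_left h (le_of_lt hkpos)
    calc (k : ℝ) * t ≤ k * (E - (∑ m, X (T m)) / k) := h2
      _ = k * E - ∑ m, X (T m) := by
        rw [mul_sub, mul_comm ((k : ℝ)) ((∑ m, X (T m)) / k),
          div_mul_cancel₀ _ (ne_of_gt hkpos)]
  obtain ⟨L, hLdef⟩ : ∃ L : ℝ, L = 4 * t := ⟨_, rfl⟩
  have hLpos : 0 < L := by rw [hLdef]; linarith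
  have hmgf := mgf_bound q X hq0 hq1 hX L
  rw [← hEdef] at hmgf
  calc ∑ T ∈ Bad, ∏ m, q (T m)
      ≤ ∑ T ∈ Bad, (∏ m, q (T m)) * Real.exp (L * (k * E - ∑ m, X (T m)) - L * (k * t)) := by
        apply Finset.sum_le_sum
        intro T hT
        have hnn : 0 ≤ L * (k * E - ∑ m, X (T m)) - L * (k * t) := by
          have h := htle T hT
          nlinarith
        nth_rewrite 1 [← mul_one (∏ m, q (T m))]
        exact mul_le_mul_of_nonneg_left (Real.one_le_exp hnn) (hw0 T)
    _ = Real.exp (-(L * (k * t))) *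
        ∑ T ∈ Bad, (∏ m, q (T m)) * Real.exp (L * (k * E - ∑ m, X (T m))) := by
        rw [Finset.mul_sum]
        apply Finset.sum_congr rfl
        intro T _
        rw [Real.exp_sub, Real.exp_neg]
        ring
    _ ≤ Real.exp (-(L * (k * t))) *
        ∑ T : Fin k → Fin n, (∏ m, q (T m)) * Real.exp (L * (k * E - ∑ m, X (T m))) := by
        apply mul_le_mul_of_nonneg_left _ (le_of_lt (Real.exp_pos _))
        apply Finset.sum_le_sum_of_subset_of_nonneg
        · rw [hBdef]; exact Finset.filter_subset _ _
        · intro T _ _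
          exact mul_nonneg (hw0 T) (le_of_lt (Real.exp_pos _))
    _ = Real.exp (-(L * (k * t))) * (∑ j, q j * Real.exp (L * (E - X j))) ^ k := by
        congr 1
        rw [Fintype.sum_pow]
        apply Finset.sum_congr rfl
        intro T _
        have hsplit : L * ((k : ℝ) * E - ∑ m, X (T m)) = ∑ m : Fin k, L * (E - X (T m)) := by
          rw [← Finset.mul_sum, Finset.sum_sub_distrib, Finset.sum_const, card_univ,
            Fintype.card_fin, nsmul_eq_mul]
        rw [hsplit, Real.exp_sum, ← Finset.prod_mul_distrib]
    _ ≤ Real.exp (-(L * (k * t))) * (Real.exp (L ^ 2 / 8)) ^ k := by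
        apply mul_le_mul_of_nonneg_left _ (le_of_lt (Real.exp_pos _))
        apply pow_le_pow_left₀ _ hmgf
        exact Finset.sum_nonneg fun j _ => mul_nonneg (hq0 j) (le_of_lt (Real.exp_pos _))
    _ = Real.exp (-(2 * k * t ^ 2)) := by
        rw [← Real.exp_nat_mul, ← Real.exp_add]
        congr 1
        rw [hLdef]
        ring
    _ < Real.exp (-(2 * k * ε ^ 2)) := by
        apply Real.exp_lt_exp.2
        have h1 : ε ^ 2 < t ^ 2 := by nlinarith
        have hk1 : (1 : ℝ) ≤ k := by exact_mod_cast hk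
        nlinarith

lemma union_bound {α ι : Type*} [Fintype α] [Fintype ι] (w : α → ℝ) (hw : ∀ a, 0 ≤ w a)
    (P : ι → α → Prop) [∀ i, DecidablePred (P i)] [DecidablePred fun a => ∃ i, P i a] :
    ∑ a ∈ univ.filter (fun a => ∃ i, P i a), w a ≤ ∑ i, ∑ a ∈ univ.filter (P i), w a := by
  calc ∑ a ∈ univ.filter (fun a => ∃ i, P i a), w a
      ≤ ∑ a ∈ univ.filter (fun a => ∃ i, P i a), ∑ i, (if P i a then w a else 0) := by
        apply Finset.sum_le_sum
        intro a ha
        obtain ⟨i0, hi0⟩ := (Finset.mem_filter.1 ha).2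
        have h2 := Finset.single_le_sum
          (f := fun i => if P i a then w a else 0)
          (fun i _ => by by_cases h : P i a <;> simp [h, hw a]) (mem_univ i0)
        simpa [hi0] using h2
    _ ≤ ∑ a : α, ∑ i, (if P i a then w a else 0) := by
        apply Finset.sum_le_sum_of_subset_of_nonneg (Finset.filter_subset _ _)
        intro a _ _
        exact Finset.sum_nonneg fun i _ => by by_cases h : P i a <;> simp [h, hw a]
    _ = ∑ i, ∑ a ∈ univ.filter (P i), w a := by
        rw [Finset.sum_comm]
        apply Finset.sum_congr rfl
        intro i _
        rw [Finset.sum_filter]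

end Helpers


theorem simple_minmax_col (r c : ℕ) (hr : 0 < r) (hc : 0 < c)
    (M : Fin r → Fin c → ℝ) (hM : ∀ i j, M i j ∈ Set.Icc (0 : ℝ) 1)
    (ε : ℝ) (hε : 0 < ε) (k : ℕ) (hk : 0 < k)
    (hkr : Real.log r / (2 * ε ^ 2) ≤ k) :
    ∃ T : Fin k → Fin c, ∀ i : Fin r,
      (⨆ q : stdSimplex ℝ (Fin c), ⨅ i' : Fin r, ∑ j, q.1 j * M i' j) - ε ≤
        (1 / k : ℝ) * ∑ m, M i (T m) := by
  classical
  haveI : NeZero r := ⟨hr.ne'⟩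
  haveI : NeZero c := ⟨hc.ne'⟩
  obtain ⟨v, hvdef⟩ : ∃ v : ℝ,
      v = ⨆ q : stdSimplex ℝ (Fin c), ⨅ i' : Fin r, ∑ j, q.1 j * M i' j := ⟨_, rfl⟩
  rw [← hvdef]
  have hkpos : (0 : ℝ) < k := by exact_mod_cast hk
  -- find an optimal strategy q
  obtain ⟨f, hfdef⟩ : ∃ f : (Fin c → ℝ) → ℝ,
      f = fun x => univ.inf' univ_nonempty (fun i : Fin r => ∑ j, x j * M i j) := ⟨_, rfl⟩
  have hfc : Continuous f := by
    rw [hfdef]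
    exact Continuous.finset_inf'_apply _ fun i _ =>
      continuous_finset_sum _ fun j _ => (continuous_apply j).mul continuous_const
  have hsne : (stdSimplex ℝ (Fin c)).Nonempty :=
    ⟨_, ite_eq_mem_stdSimplex ℝ (Classical.arbitrary (Fin c))⟩
  haveI : Nonempty (stdSimplex ℝ (Fin c)) := hsne.to_subtype
  obtain ⟨q, hqmem, hqmax⟩ :=
    (isCompact_stdSimplex ℝ (Fin c)).exists_isMaxOn hsne hfc.continuousOn
  have hq0 : ∀ j, 0 ≤ q j := hqmem.1
  have hq1 : ∑ j, q j = 1 := hqmem.2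
  have hvle : v ≤ f q := by
    rw [hvdef]
    apply ciSup_le
    intro p
    have h1 : (⨅ i' : Fin r, ∑ j, p.1 j * M i' j) = f p.1 := by
      rw [hfdef]
      exact (inf'_univ_eq_ciInf _).symm
    rw [h1]
    exact hqmax p.2
  have hqE : ∀ i, v ≤ ∑ j, q j * M i j := by
    intro i
    refine hvle.trans ?_
    rw [hfdef]
    exact inf'_le _ (mem_univ i)
  have hw0 : ∀ T : Fin k → Fin c, 0 ≤ ∏ m, q (T m) := fun T => prod_nonneg fun m _ => hq0 (T m)
  have hwsum : ∑ T : Fin k → Fin c, ∏ m, q (T m) = 1 := by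
    rw [← Fintype.sum_pow q k, hq1, one_pow]
  -- exp bound vs 1/r
  have hexp_le : Real.exp (-(2 * k * ε ^ 2)) ≤ 1 / r := by
    have h1 : Real.log r ≤ 2 * k * ε ^ 2 := by
      rw [div_le_iff₀ (by positivity : (0 : ℝ) < 2 * ε ^ 2)] at hkr
      nlinarith
    calc Real.exp (-(2 * k * ε ^ 2)) ≤ Real.exp (-(Real.log r)) :=
          Real.exp_le_exp.2 (by linarith)
      _ = 1 / r := by
          rw [Real.exp_neg, Real.exp_log (by exact_mod_cast hr : (0 : ℝ) < r), one_div]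
  -- union bound
  have hrow : ∀ i : Fin r,
      ∑ T ∈ univ.filter (fun T : Fin k → Fin c => ∑ m, M i (T m) < k * (v - ε)), ∏ m, q (T m)
        < 1 / r := fun i =>
    (row_bound hk q (fun j => M i j) hq0 hq1 (fun j => hM i j) ε v hε (hqE i)).trans_le hexp_le
  have hBlt : ∑ T ∈ univ.filter
      (fun T : Fin k → Fin c => ∃ i, ∑ m, M i (T m) < k * (v - ε)), ∏ m, q (T m) < 1 := by
    have h1 := union_bound (fun T : Fin k → Fin c => ∏ m, q (T m)) hw0
      (fun i T => ∑ m, M i (T m) < k * (v - ε))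
    have h2 : ∑ i : Fin r, ∑ T ∈ univ.filter
        (fun T : Fin k → Fin c => ∑ m, M i (T m) < k * (v - ε)), ∏ m, q (T m)
        < ∑ _i : Fin r, (1 : ℝ) / r :=
      Finset.sum_lt_sum_of_nonempty univ_nonempty fun i _ => hrow i
    have h3 : ∑ _i : Fin r, (1 : ℝ) / r = 1 := by
      rw [Finset.sum_const, card_univ, Fintype.card_fin, nsmul_eq_mul]
      field_simp
    calc ∑ T ∈ (univ.filter (fun T : Fin k → Fin c => ∃ i, ∑ m, M i (T m) < k * (v - ε))),
            ∏ m, q (T m)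
        ≤ ∑ i : Fin r,
            ∑ T ∈ (univ.filter (fun T : Fin k → Fin c => ∑ m, M i (T m) < k * (v - ε))),
              ∏ m, q (T m) := h1
      _ < 1 := by rw [← h3]; exact h2
  have hex : ∃ T : Fin k → Fin c,
      T ∉ univ.filter (fun T : Fin k → Fin c => ∃ i, ∑ m, M i (T m) < k * (v - ε)) := by
    by_contra h
    push_neg at h
    rw [Finset.eq_univ_iff_forall.2 h, hwsum] at hBlt
    exact lt_irrefl _ hBlt
  obtain ⟨T, hT⟩ := hex
  refine ⟨T, fun i => ?_⟩
  have hTgood : ¬ (∑ m, M i (T m) < k * (v - ε)) := by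
    intro hbad
    exact hT (Finset.mem_filter.2 ⟨mem_univ T, ⟨i, hbad⟩⟩)
  push_neg at hTgood
  have h4 : v - ε ≤ (∑ m, M i (T m)) / k := by
    rw [le_div_iff₀ hkpos]
    linarith [hTgood]
  calc v - ε ≤ (∑ m, M i (T m)) / k := h4
    _ = (1 / k : ℝ) * ∑ m, M i (T m) := by ring
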